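/- For fixed x > 0 and ρ > 0, the map σ ↦ exp(−ρ·g_σ(x)) on (1, ∞) is increasing in σ, where g_σ(x) = (ln(1+x))^{σ/(σ−1)} / W(ln(1+x))^{1/(σ−1)}; equivalently, σ ↦ g_σ(x) is decreasing on (1, ∞). -/

import Mathlib

open Real

/-- For fixed x > 0 and ρ > 0, σ ↦ exp(−ρ·g_σ(x)) is increasing on (1, ∞);
    equivalently σ ↦ g_σ(x) is decreasing, where
    g_σ(x) = (ln(1+x))^{σ/(σ−1)}/W(ln(1+x))^{1/(σ−1)}. -/
theorem f_rho_sigma_mono_in_sigma (x ρ : ℝ) (hx : 0 < x) (hρ : 0 < ρ)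
    (W : ℝ → ℝ)
    (hW : ∀ t : ℝ, 0 ≤ t → 0 ≤ W t ∧ W t * Real.exp (W t) = t) :
    ∀ σ₁ σ₂ : ℝ, 1 < σ₁ → σ₁ ≤ σ₂ →
      (Real.log (1 + x) ^ (σ₂ / (σ₂ - 1)) / W (Real.log (1 + x)) ^ (1 / (σ₂ - 1)) ≤
        Real.log (1 + x) ^ (σ₁ / (σ₁ - 1)) / W (Real.log (1 + x)) ^ (1 / (σ₁ - 1))) ∧
      (Real.exp (-ρ * (Real.log (1 + x) ^ (σ₁ / (σ₁ - 1)) /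
          W (Real.log (1 + x)) ^ (1 / (σ₁ - 1)))) ≤
        Real.exp (-ρ * (Real.log (1 + x) ^ (σ₂ / (σ₂ - 1)) /
          W (Real.log (1 + x)) ^ (1 / (σ₂ - 1))))) := by
  intro σ₁ σ₂ h1 h12
  set t := Real.log (1 + x) with htdef
  have ht : 0 < t := Real.log_pos (by linarith)
  obtain ⟨hw0, hwe⟩ := hW t ht.le
  set w := W t with hwdef
  have hwpos : 0 < w := by
    rcases lt_or_eq_of_le hw0 with h | h
    · exact h
    · exfalso; rw [← h] at hwe; simp at hwe; linarith
  have hwt : w ≤ t := by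
    calc w = w * 1 := (mul_one w).symm
    _ ≤ w * Real.exp w := by
        apply mul_le_mul_of_nonneg_left _ hw0
        simpa using Real.one_le_exp hw0
    _ = t := hwe
  -- rewrite g_σ = t * (t/w)^(1/(σ-1))
  have key : ∀ σ : ℝ, 1 < σ →
      t ^ (σ / (σ - 1)) / w ^ (1 / (σ - 1)) = t * (t / w) ^ (1 / (σ - 1)) := by
    intro σ hσ
    have hs : σ - 1 ≠ 0 := by linarith
    have hexp : σ / (σ - 1) = 1 + 1 / (σ - 1) := by field_simp; ring
    rw [hexp, Real.rpow_add ht, Real.rpow_one,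
      Real.div_rpow ht.le hwpos.le, mul_div_assoc]
  have key1 := key σ₁ h1
  have key2 := key σ₂ (lt_of_lt_of_le h1 h12)
  have hbase : 1 ≤ t / w := (one_le_div hwpos).mpr hwt
  have hexpo : 1 / (σ₂ - 1) ≤ 1 / (σ₁ - 1) := by
    apply one_div_le_one_div_of_le (by linarith) (by linarith)
  have hmain : t ^ (σ₂ / (σ₂ - 1)) / w ^ (1 / (σ₂ - 1)) ≤
      t ^ (σ₁ / (σ₁ - 1)) / w ^ (1 / (σ₁ - 1)) := by
    rw [key1, key2]
    exact mul_le_mul_of_nonneg_left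
      (Real.rpow_le_rpow_of_exponent_le hbase hexpo) ht.le
  exact ⟨hmain, Real.exp_le_exp.mpr (by nlinarith)⟩
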